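/- Let v, w ∈ ℝ^d lie in the same chamber of constancy, i.e. ⌈n_i(v)⌉ = ⌈n_i(w)⌉ for all i = 1,…,t. Then {m ∈ ℤ^d : n_i(m − v) > 0 for all i} ⊆ {m ∈ ℤ^d : n_i(m − w) > 0 for all i} if and only if {i : n_i(w) ∈ ℤ} ⊆ {i : n_i(v) ∈ ℤ}; equivalently, the open conic module of v is contained in the open conic module of w exactly when the open cell containing v lies in the boundary (closure) of the open cell containing w. -/

import Mathlib

open Set

set_option synthInstance.maxHeartbeats 400000
set_option maxHeartbeats 1000000

noncomputable section

/-- The embedding of the lattice `ℤ^d` into `ℝ^d`. -/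
def ιZ (d : ℕ) (m : Fin d → ℤ) : Fin d → ℝ := fun j => (m j : ℝ)

/-- The lattice points of the translated cone `C + v`, where
`C = {x | ∀ i, 0 ≤ n i x}`. -/
def latticePts {d t : ℕ} (n : Fin t → ((Fin d → ℝ) →ₗ[ℝ] ℝ)) (v : Fin d → ℝ) :
    Set (Fin d → ℤ) :=
  {m | ∀ i, 0 ≤ n i (ιZ d m - v)}

/-- The lattice points of the interior of the translated cone `C + v`
(the "open conic" lattice set). -/
def openLatticePts {d t : ℕ} (n : Fin t → ((Fin d → ℝ) →ₗ[ℝ] ℝ)) (v : Fin d → ℝ) :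
    Set (Fin d → ℤ) :=
  {m | ∀ i, 0 < n i (ιZ d m - v)}

lemma iZ_add {d : ℕ} (a b : Fin d → ℤ) : ιZ d (a + b) = ιZ d a + ιZ d b := by
  funext j; simp [ιZ]

lemma iZ_smul {d : ℕ} (k : ℤ) (a : Fin d → ℤ) : ιZ d (k • a) = (k : ℝ) • ιZ d a := by
  funext j; simp [ιZ]

lemma rat_eval {d t : ℕ} (n : Fin t → ((Fin d → ℝ) →ₗ[ℝ] ℝ))
    (hint : ∀ i (m : Fin d → ℤ), ∃ z : ℤ, n i (ιZ d m) = z)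
    (i : Fin t) (q : Fin d → ℚ) : ∃ r : ℚ, n i (fun j => (q j : ℝ)) = r := by
  choose c hc using fun j => hint i (Pi.single j 1)
  refine ⟨∑ j, q j * c j, ?_⟩
  rw [LinearMap.pi_apply_eq_sum_univ]
  have hsingle : ∀ j : Fin d, n i (fun k => if j = k then (1:ℝ) else 0) = (c j : ℝ) := by
    intro j
    rw [← hc j]
    congr 1
    funext k
    simp only [ιZ, Pi.single_apply]
    by_cases h : j = k <;> simp [h, eq_comm]
  calc ∑ j, (q j : ℝ) • n i (fun k => if j = k then (1:ℝ) else 0)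
      = ∑ j, ((q j * c j : ℚ) : ℝ) := by
        refine Finset.sum_congr rfl fun j _ => ?_
        rw [hsingle j, smul_eq_mul]; push_cast; ring
    _ = ((∑ j, q j * c j : ℚ) : ℝ) := by push_cast; ring

lemma common_den {d : ℕ} (q : Fin d → ℚ) :
    ∃ (N : ℕ) (u : Fin d → ℤ), 0 < N ∧ ∀ j, (u j : ℚ) = (N : ℚ) * q j := by
  have key : ∀ j, (((q j).num * (((∏ k, (q k).den) / (q j).den : ℕ) : ℤ) : ℤ) : ℚ)
      = ((∏ k, (q k).den : ℕ) : ℚ) * q j := by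
    intro j
    have hdvd : (q j).den ∣ ∏ k, (q k).den := Finset.dvd_prod_of_mem _ (Finset.mem_univ j)
    obtain ⟨P, hk⟩ := hdvd
    rw [hk, Nat.mul_div_cancel_left _ (q j).pos]
    push_cast
    rw [mul_comm ((q j).den : ℚ) (P : ℚ), mul_assoc, Rat.den_mul_eq_num]
    ring
  exact ⟨∏ k, (q k).den, fun j => (q j).num * (((∏ k, (q k).den) / (q j).den : ℕ) : ℤ),
    Finset.prod_pos (fun j _ => (q j).pos), key⟩

lemma exists_rat_mem {d : ℕ} {U : Set (Fin d → ℝ)} (hU : IsOpen U) {y : Fin d → ℝ}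
    (hy : y ∈ U) : ∃ q : Fin d → ℚ, (fun j => (q j : ℝ)) ∈ U := by
  obtain ⟨ε, hε, hball⟩ := Metric.isOpen_iff.1 hU y hy
  choose q hq using fun j => exists_rat_near (y j) hε
  refine ⟨q, hball ?_⟩
  rw [Metric.mem_ball, dist_pi_lt_iff hε]
  intro j
  rw [Real.dist_eq, abs_sub_comm]
  exact hq j

lemma open_cell {d t : ℕ} (n : Fin t → ((Fin d → ℝ) →ₗ[ℝ] ℝ)) (i₀ : Fin t) :
    IsOpen {x : Fin d → ℝ | (∀ j, j ≠ i₀ → 0 < n j x) ∧ n i₀ x < 0} := by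
  have hcont : ∀ i : Fin t, Continuous (n i) := fun i => (n i).continuous_of_finiteDimensional
  have h1 : IsOpen {x : Fin d → ℝ | ∀ j, j ≠ i₀ → 0 < n j x} := by
    have he : {x : Fin d → ℝ | ∀ j, j ≠ i₀ → 0 < n j x}
        = ⋂ j, {x | j ≠ i₀ → 0 < n j x} := by
      ext x; simp [Set.mem_iInter]
    rw [he]
    refine isOpen_iInter_of_finite fun j => ?_
    by_cases h : j = i₀
    · convert isOpen_univ using 1
      ext x; simp [h]
    · have he2 : {x : Fin d → ℝ | j ≠ i₀ → 0 < n j x} = {x | 0 < n j x} := by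
        ext x; simp [h]
      rw [he2]
      exact isOpen_lt continuous_const (hcont j)
  have h2 : IsOpen {x : Fin d → ℝ | n i₀ x < 0} := isOpen_lt (hcont i₀) continuous_const
  exact h1.inter h2

lemma open_strict {d t : ℕ} (n : Fin t → ((Fin d → ℝ) →ₗ[ℝ] ℝ)) :
    IsOpen {x : Fin d → ℝ | ∀ i, 0 < n i x} := by
  have hcont : ∀ i : Fin t, Continuous (n i) := fun i => (n i).continuous_of_finiteDimensional
  have he : {x : Fin d → ℝ | ∀ i, 0 < n i x} = ⋂ i, {x | 0 < n i x} := by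
    ext x; simp [Set.mem_iInter]
  rw [he]
  exact isOpen_iInter_of_finite fun i => isOpen_lt continuous_const (hcont i)

lemma strict_pt {d t : ℕ} (n : Fin t → ((Fin d → ℝ) →ₗ[ℝ] ℝ))
    (hne : ∀ i, n i ≠ 0) {C : Set (Fin d → ℝ)} (hC : C = {x | ∀ i, 0 ≤ n i x})
    (hfull : (interior C).Nonempty) : ∃ y, ∀ i, 0 < n i y := by
  obtain ⟨y₀, hy₀⟩ := hfull
  refine ⟨y₀, fun i => ?_⟩
  have hy₀C : y₀ ∈ C := interior_subset hy₀
  rw [hC] at hy₀C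
  rcases lt_or_eq_of_le (hy₀C i) with h | h
  · exact h
  exfalso
  obtain ⟨z, hz⟩ : ∃ z, n i z ≠ 0 := by
    by_contra hcon
    push_neg at hcon
    exact hne i (LinearMap.ext fun x => by simp [hcon])
  set z' : Fin d → ℝ := (-(n i z)) • z with hz'def
  have hz' : n i z' < 0 := by
    rw [hz'def, map_smul, smul_eq_mul]
    nlinarith [mul_self_pos.2 hz]
  have hmem := mem_interior_iff_mem_nhds.1 hy₀
  rw [Metric.mem_nhds_iff] at hmem
  obtain ⟨ε, hε, hball⟩ := hmem
  have hnorm : (0:ℝ) ≤ ‖z'‖ := norm_nonneg _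
  set δ : ℝ := ε / (2 * (‖z'‖ + 1)) with hδdef
  have hδ : 0 < δ := by positivity
  have hmem2 : y₀ + δ • z' ∈ C := by
    apply hball
    rw [Metric.mem_ball, dist_eq_norm, add_sub_cancel_left, norm_smul, Real.norm_eq_abs,
      abs_of_pos hδ, hδdef, div_mul_eq_mul_div, div_lt_iff₀ (by positivity)]
    nlinarith
  rw [hC] at hmem2
  have h2 := hmem2 i
  rw [map_add, map_smul, smul_eq_mul, ← h] at h2
  nlinarith

/-- for `v, w` in the same chamber of constancy, the open conic lattice
set of `v` is contained in that of `w` iff every index where `n i w` is an integer is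
also an index where `n i v` is an integer (i.e. the open cell of `v` lies in the
closure of the open cell of `w`). -/
theorem stmt_6
    (d t : ℕ) (hd : 1 ≤ d)
    (n : Fin t → ((Fin d → ℝ) →ₗ[ℝ] ℝ))
    (hne : ∀ i, n i ≠ 0)
    (hint : ∀ i (m : Fin d → ℤ), ∃ z : ℤ, n i (ιZ d m) = z)
    (hprim : ∀ i (z : ℤ), ∃ m : Fin d → ℤ, n i (ιZ d m) = z)
    (C : Set (Fin d → ℝ)) (hC : C = {x | ∀ i, 0 ≤ n i x})
    (hfull : (interior C).Nonempty)
    (hpointed : Submodule.span ℝ (Set.range n) = ⊤)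
    (hirr : ∀ i, C ⊂ {x | ∀ j, j ≠ i → 0 ≤ n j x})
    (v w : Fin d → ℝ) (hsame : ∀ i, ⌈n i v⌉ = ⌈n i w⌉) :
    openLatticePts n v ⊆ openLatticePts n w ↔
      {i | ∃ z : ℤ, n i w = z} ⊆ {i | ∃ z : ℤ, n i v = z} := by
  constructor
  · -- hard direction
    intro hsub i₀ hi₀
    obtain ⟨z₀, hz₀⟩ := hi₀
    by_contra hv
    -- set up geometry
    obtain ⟨y₀, hy₀⟩ := strict_pt n hne hC hfull
    obtain ⟨x, hx, hxC⟩ := exists_of_ssubset (hirr i₀)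
    rw [hC] at hxC
    have hx' : ∀ j, j ≠ i₀ → 0 ≤ n j x := hx
    have hxneg : n i₀ x < 0 := by
      by_contra hcon
      push_neg at hcon
      refine hxC fun i => ?_
      by_cases h : i = i₀
      · rw [h]; exact hcon
      · exact hx' i h
    have hb : 0 < n i₀ y₀ := hy₀ i₀
    set ε : ℝ := (-(n i₀ x)) / (2 * n i₀ y₀) with hεdef
    have hε : 0 < ε := div_pos (by linarith) (by linarith)
    have hεb : ε * n i₀ y₀ = -(n i₀ x) / 2 := by
      rw [hεdef]; field_simp
    set x' : Fin d → ℝ := x + ε • y₀ with hx'def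
    have hx'mem : x' ∈ {x : Fin d → ℝ | (∀ j, j ≠ i₀ → 0 < n j x) ∧ n i₀ x < 0} := by
      constructor
      · intro j hj
        have hval : n j x' = n j x + ε * n j y₀ := by
          rw [hx'def, map_add, map_smul, smul_eq_mul]
        rw [hval]
        have := hy₀ j
        have := hx' j hj
        nlinarith
      · have hval : n i₀ x' = n i₀ x + ε * n i₀ y₀ := by
          rw [hx'def, map_add, map_smul, smul_eq_mul]
        rw [hval, hεb]
        linarith
    obtain ⟨qx, hqx⟩ := exists_rat_mem (open_cell n i₀) hx'mem
    obtain ⟨qy, hqy⟩ := exists_rat_mem (open_strict n) hy₀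
    obtain ⟨a', ha'⟩ := rat_eval n hint i₀ qx
    obtain ⟨b', hb'⟩ := rat_eval n hint i₀ qy
    have haneg : (a' : ℝ) < 0 := ha' ▸ hqx.2
    have hbpos : (0:ℝ) < (b' : ℝ) := hb' ▸ hqy i₀
    have has : a' < 0 := by exact_mod_cast haneg
    have hbs : 0 < b' := by exact_mod_cast hbpos
    set s' : ℚ := (-a') / (b' - a') with hs'def
    have hs0 : 0 < s' := div_pos (by linarith) (by linarith)
    have hs1 : s' < 1 := by
      rw [hs'def, div_lt_one (by linarith)]
      linarith
    set qq : Fin d → ℚ := qx + s' • (qy - qx) with hqqdef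
    set p : Fin d → ℝ := fun j => (qq j : ℝ) with hpdef
    have hp : p = (fun j => (qx j : ℝ))
        + ((s' : ℝ)) • ((fun j => (qy j : ℝ)) - (fun j => (qx j : ℝ))) := by
      funext j
      simp only [hpdef, hqqdef, Pi.add_apply, Pi.smul_apply, Pi.sub_apply, smul_eq_mul]
      push_cast
      ring
    have hs0R : (0:ℝ) < (s' : ℝ) := by exact_mod_cast hs0
    have hs1R : ((s' : ℚ) : ℝ) < 1 := by exact_mod_cast hs1
    have hpi₀ : n i₀ p = 0 := by
      rw [hp, map_add, map_smul, map_sub, ha', hb', smul_eq_mul, hs'def]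
      have hba : (b' : ℝ) - (a' : ℝ) ≠ 0 := by linarith
      push_cast
      field_simp
      ring
    have hpj : ∀ j, j ≠ i₀ → 0 < n j p := by
      intro j hj
      rw [hp, map_add, map_smul, map_sub, smul_eq_mul]
      have h1 := hqx.1 j hj
      have h2 := hqy j
      nlinarith
    obtain ⟨N, u, hN, hu⟩ := common_den qq
    have hNR : (0:ℝ) < (N:ℝ) := by exact_mod_cast hN
    have hιu : ιZ d u = (N : ℝ) • p := by
      funext j
      simp only [ιZ, Pi.smul_apply, smul_eq_mul, hpdef]
      exact_mod_cast hu j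
    have hui₀ : n i₀ (ιZ d u) = 0 := by
      rw [hιu, map_smul, smul_eq_mul, hpi₀, mul_zero]
    have huj : ∀ j, j ≠ i₀ → (1:ℝ) ≤ n j (ιZ d u) := by
      intro j hj
      obtain ⟨zu, hzu⟩ := hint j u
      have hpos : 0 < n j (ιZ d u) := by
        rw [hιu, map_smul, smul_eq_mul]
        exact mul_pos hNR (hpj j hj)
      rw [hzu] at hpos ⊢
      have : (0:ℤ) < zu := by exact_mod_cast hpos
      exact_mod_cast this
    obtain ⟨m₀, hm₀⟩ := hprim i₀ ⌈n i₀ v⌉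
    have : Nonempty (Fin t) := ⟨i₀⟩
    obtain ⟨K, hK⟩ := exists_int_gt
      (Finset.univ.sup' Finset.univ_nonempty fun j => n j v - n j (ιZ d m₀))
    set K' : ℤ := max K 0 with hK'def
    have hK'0 : (0:ℝ) ≤ (K' : ℝ) := by
      have : (0:ℤ) ≤ K' := le_max_right _ _
      exact_mod_cast this
    have hKK' : (K:ℝ) ≤ (K' : ℝ) := by
      have : K ≤ K' := le_max_left _ _
      exact_mod_cast this
    set m : Fin d → ℤ := m₀ + K' • u with hmdef
    have hmval : ∀ i, n i (ιZ d m) = n i (ιZ d m₀) + (K' : ℝ) * n i (ιZ d u) := by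
      intro i
      rw [hmdef, iZ_add, iZ_smul, map_add, map_smul, smul_eq_mul]
    have hmv : m ∈ openLatticePts n v := by
      intro i
      rw [map_sub, hmval i]
      by_cases h : i = i₀
      · subst h
        rw [hm₀, hui₀, mul_zero, add_zero]
        have h1 : n i v ≤ (⌈n i v⌉ : ℝ) := Int.le_ceil _
        have h2 : n i v ≠ (⌈n i v⌉ : ℝ) := fun hcon => hv ⟨⌈n i v⌉, hcon⟩
        have := lt_of_le_of_ne h1 h2
        linarith
      · have h1 := huj i h
        have h2 : n i v - n i (ιZ d m₀)
            ≤ Finset.univ.sup' Finset.univ_nonempty fun j => n j v - n j (ιZ d m₀) := by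
          exact Finset.le_sup' (fun j => n j v - n j (ιZ d m₀)) (Finset.mem_univ i)
        have h3 : (K' : ℝ) * 1 ≤ (K' : ℝ) * n i (ιZ d u) :=
          mul_le_mul_of_nonneg_left h1 hK'0
        nlinarith
    have hmw := hsub hmv i₀
    rw [map_sub, hmval i₀, hm₀, hui₀, mul_zero, add_zero] at hmw
    have hcw : (⌈n i₀ v⌉ : ℝ) = n i₀ w := by
      rw [hsame i₀, hz₀, Int.ceil_intCast]
    linarith
  · -- easy direction
    intro h m hm i
    obtain ⟨z, hz⟩ := hint i m
    have hmi := hm i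
    rw [map_sub, hz] at hmi
    show 0 < n i (ιZ d m - w)
    rw [map_sub, hz]
    have h1 : n i v < z := by linarith
    have h2 : ⌈n i v⌉ ≤ z := Int.ceil_le.2 h1.le
    by_cases hw : ∃ z' : ℤ, n i w = z'
    · obtain ⟨zv, hzv⟩ := h hw
      obtain ⟨zw, hzw⟩ := hw
      have e1 : ⌈n i v⌉ = zv := by rw [hzv]; exact Int.ceil_intCast _
      have e2 : ⌈n i w⌉ = zw := by rw [hzw]; exact Int.ceil_intCast _
      have hvw : n i v = n i w := by
        rw [hzv, hzw]
        have : zv = zw := by rw [← e1, ← e2, hsame i]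
        exact_mod_cast this
      linarith
    · have hlt : n i w < (⌈n i w⌉ : ℝ) :=
        lt_of_le_of_ne (Int.le_ceil _) (fun hcon => hw ⟨⌈n i w⌉, hcon⟩)
      have hle : (⌈n i w⌉ : ℝ) ≤ (z : ℝ) := by
        rw [← hsame i]
        exact_mod_cast h2
      linarith
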